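/- Let ξ be a random field on ℝ^d and T₁, T₂ disjoint subsets of ℝ^d. Suppose there exist random fields η₁, η₂ on the same probability space such that η₁ and η₂ are independent and P{ξ(x) = η_i(x) for all x ∈ T_i} ≥ 1 − δ_i for i = 1, 2. Then the absolute regularity coefficient β(T₁, T₂) := ‖P_{T₁∪T₂} − P_{T₁} × P_{T₂}‖_var satisfies β(T₁, T₂) ≤ 8(δ₁ + δ₂). -/

import Mathlib

open MeasureTheory
open scoped ENNReal NNReal

section BetaAux

variable {Ω : Type*} [MeasurableSpace Ω]

/-- If `f = h` on a set of measure at least `1 - δ`, then the pushforward measures differ by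
at most `δ` on every measurable set. -/
lemma map_apply_le_of_eqOn (μ : Measure Ω) [IsProbabilityMeasure μ]
    {γ : Type*} [MeasurableSpace γ] {f h : Ω → γ} (hf : Measurable f) (hh : Measurable h)
    {E : Set Ω} (hE : ∀ ω ∈ E, f ω = h ω) {δ : ℝ}
    (hEδ : ENNReal.ofReal (1 - δ) ≤ μ E) {A : Set γ} (hA : MeasurableSet A) :
    μ.map f A ≤ μ.map h A + ENNReal.ofReal δ := by
  rw [Measure.map_apply hf hA, Measure.map_apply hh hA]
  set S : Set Ω := f ⁻¹' A \ h ⁻¹' A with hSdef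
  have hSm : MeasurableSet S := (hf hA).diff (hh hA)
  have hES : E ⊆ Sᶜ := by
    intro ω hω hωS
    exact hωS.2 (by rw [Set.mem_preimage, ← hE ω hω]; exact hωS.1)
  have hcompl : μ Sᶜ = 1 - μ S := by
    rw [measure_compl hSm (measure_ne_top μ S), measure_univ]
  have h1 : ENNReal.ofReal (1 - δ) + μ S ≤ 1 := by
    have h2 : ENNReal.ofReal (1 - δ) ≤ 1 - μ S := hcompl ▸ hEδ.trans (measure_mono hES)
    have hμS1 : μ S ≤ 1 := prob_le_one
    calc ENNReal.ofReal (1 - δ) + μ S ≤ (1 - μ S) + μ S := by gcongr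
      _ = 1 := tsub_add_cancel_of_le hμS1
  have h3 : (1 : ℝ≥0∞) ≤ ENNReal.ofReal (1 - δ) + ENNReal.ofReal δ := by
    calc (1 : ℝ≥0∞) = ENNReal.ofReal ((1 - δ) + δ) := by norm_num
      _ ≤ ENNReal.ofReal (1 - δ) + ENNReal.ofReal δ := ENNReal.ofReal_add_le
  have hμS : μ S ≤ ENNReal.ofReal δ := by
    exact (ENNReal.add_le_add_iff_left ENNReal.ofReal_ne_top).1 (h1.trans h3)
  calc μ (f ⁻¹' A) ≤ μ (h ⁻¹' A ∪ S) := by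
        refine measure_mono fun ω hω => ?_
        by_cases hωh : ω ∈ h ⁻¹' A
        · exact Or.inl hωh
        · exact Or.inr ⟨hω, hωh⟩
    _ ≤ μ (h ⁻¹' A) + μ S := measure_union_le _ _
    _ ≤ μ (h ⁻¹' A) + ENNReal.ofReal δ := by gcongr

/-- Total variation bound for the difference of two finite measures that are uniformly
`ε`-close on measurable sets. -/
lemma totalVariation_le_of_close {α : Type*} [MeasurableSpace α]
    (a b : Measure α) [IsFiniteMeasure a] [IsFiniteMeasure b] {ε : ℝ} (hε : 0 ≤ ε)
    (hab : ∀ A : Set α, MeasurableSet A → a A ≤ b A + ENNReal.ofReal ε)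
    (hba : ∀ A : Set α, MeasurableSet A → b A ≤ a A + ENNReal.ofReal ε) :
    (a.toSignedMeasure - b.toSignedMeasure).totalVariation Set.univ
      ≤ ENNReal.ofReal (2 * ε) := by
  set s : SignedMeasure α := a.toSignedMeasure - b.toSignedMeasure with hs
  obtain ⟨i, hi₁, hi₂, hi₃, hpos, hneg⟩ := s.toJordanDecomposition_spec
  have key : ∀ j : Set α, MeasurableSet j → s j ≤ ε ∧ -s j ≤ ε := by
    intro j hj
    have hsj : s j = (a j).toReal - (b j).toReal := Measure.toSignedMeasure_sub_apply hj
    have hab' := hab j hj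
    have hba' := hba j hj
    have h1 : (a j).toReal ≤ (b j).toReal + ε := by
      have := ENNReal.toReal_mono (by finiteness) hab'
      rwa [ENNReal.toReal_add (measure_ne_top _ _) ENNReal.ofReal_ne_top,
        ENNReal.toReal_ofReal hε] at this
    have h2 : (b j).toReal ≤ (a j).toReal + ε := by
      have := ENNReal.toReal_mono (by finiteness) hba'
      rwa [ENNReal.toReal_add (measure_ne_top _ _) ENNReal.ofReal_ne_top,
        ENNReal.toReal_ofReal hε] at this
    constructor <;> rw [hsj] <;> linarith
  rw [SignedMeasure.totalVariation, Measure.add_apply, hpos, hneg,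
    SignedMeasure.toMeasureOfZeroLE_apply _ hi₂ hi₁ MeasurableSet.univ,
    SignedMeasure.toMeasureOfLEZero_apply _ hi₃ hi₁.compl MeasurableSet.univ]
  have e1 : ∀ (x : ℝ) (hx : 0 ≤ x), ENNReal.ofNNReal ⟨x, hx⟩ = ENNReal.ofReal x :=
    fun x hx => (ENNReal.ofReal_eq_coe_nnreal hx).symm
  rw [← ENNReal.ofReal_coe_nnreal, ← ENNReal.ofReal_coe_nnreal]
  have hki := (key (i ∩ Set.univ) (hi₁.inter MeasurableSet.univ)).1
  have hkc := (key (iᶜ ∩ Set.univ) (hi₁.compl.inter MeasurableSet.univ)).2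
  calc ENNReal.ofReal (s (i ∩ Set.univ)) + ENNReal.ofReal (-s (iᶜ ∩ Set.univ))
      ≤ ENNReal.ofReal ε + ENNReal.ofReal ε :=
        add_le_add (ENNReal.ofReal_le_ofReal hki) (ENNReal.ofReal_le_ofReal hkc)
    _ = ENNReal.ofReal (2 * ε) := by
        rw [← ENNReal.ofReal_add hε hε]; ring_nf

end BetaAux

/-- Lemma bounding the absolute regularity (β-mixing) coefficient of a random field `ξ`
on `ℝ^d` between two disjoint sets `T₁, T₂`, given independent approximating fields. -/
theorem beta_le_of_indep_approx {d : ℕ} {Ω : Type*} [MeasurableSpace Ω]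
    (μ : Measure Ω) [IsProbabilityMeasure μ]
    (ξ η₁ η₂ : Ω → EuclideanSpace ℝ (Fin d) → ℝ)
    (hξ : Measurable ξ) (hη₁ : Measurable η₁) (hη₂ : Measurable η₂)
    (T₁ T₂ : Set (EuclideanSpace ℝ (Fin d))) (hdisj : Disjoint T₁ T₂)
    (hindep : ProbabilityTheory.IndepFun η₁ η₂ μ)
    (δ₁ δ₂ : ℝ) (hδ₁ : 0 < δ₁) (hδ₂ : 0 < δ₂)
    (h₁ : ENNReal.ofReal (1 - δ₁) ≤ μ {ω | ∀ x ∈ T₁, ξ ω x = η₁ ω x})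
    (h₂ : ENNReal.ofReal (1 - δ₂) ≤ μ {ω | ∀ x ∈ T₂, ξ ω x = η₂ ω x}) :
    ((μ.map (fun ω => ((fun x : T₁ => ξ ω x), (fun x : T₂ => ξ ω x)))).toSignedMeasure
      - ((μ.map (fun ω => (fun x : T₁ => ξ ω x))).prod
          (μ.map (fun ω => (fun x : T₂ => ξ ω x)))).toSignedMeasure).totalVariation Set.univ
      ≤ ENNReal.ofReal (8 * (δ₁ + δ₂)) := by
  classical
  -- restricted fields
  set f₁ : Ω → (T₁ → ℝ) := fun ω => (fun x : T₁ => ξ ω x) with hf₁def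
  set f₂ : Ω → (T₂ → ℝ) := fun ω => (fun x : T₂ => ξ ω x) with hf₂def
  set g₁ : Ω → (T₁ → ℝ) := fun ω => (fun x : T₁ => η₁ ω x) with hg₁def
  set g₂ : Ω → (T₂ → ℝ) := fun ω => (fun x : T₂ => η₂ ω x) with hg₂def
  have hf₁ : Measurable f₁ := measurable_pi_iff.2 fun x => (measurable_pi_apply _).comp hξ
  have hf₂ : Measurable f₂ := measurable_pi_iff.2 fun x => (measurable_pi_apply _).comp hξ
  have hg₁ : Measurable g₁ := measurable_pi_iff.2 fun x => (measurable_pi_apply _).comp hη₁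
  have hg₂ : Measurable g₂ := measurable_pi_iff.2 fun x => (measurable_pi_apply _).comp hη₂
  -- good events
  set E₁ : Set Ω := {ω | ∀ x ∈ T₁, ξ ω x = η₁ ω x} with hE₁def
  set E₂ : Set Ω := {ω | ∀ x ∈ T₂, ξ ω x = η₂ ω x} with hE₂def
  have hE₁eq : ∀ ω ∈ E₁, f₁ ω = g₁ ω := fun ω hω => funext fun x => hω x x.2
  have hE₂eq : ∀ ω ∈ E₂, f₂ ω = g₂ ω := fun ω hω => funext fun x => hω x x.2
  -- independence of the restricted approximating fields
  have hindep' : ProbabilityTheory.IndepFun g₁ g₂ μ := by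
    have hφ₁ : Measurable (fun u : EuclideanSpace ℝ (Fin d) → ℝ => (fun x : T₁ => u x)) :=
      measurable_pi_iff.2 fun x => measurable_pi_apply _
    have hφ₂ : Measurable (fun u : EuclideanSpace ℝ (Fin d) → ℝ => (fun x : T₂ => u x)) :=
      measurable_pi_iff.2 fun x => measurable_pi_apply _
    exact hindep.comp hφ₁ hφ₂
  have hmap : μ.map (fun ω => (g₁ ω, g₂ ω)) = (μ.map g₁).prod (μ.map g₂) :=
    (ProbabilityTheory.indepFun_iff_map_prod_eq_prod_map_map
      hg₁.aemeasurable hg₂.aemeasurable).1 hindep'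
  -- probability measure instances
  haveI : IsProbabilityMeasure (μ.map f₁) := Measure.isProbabilityMeasure_map hf₁.aemeasurable
  haveI : IsProbabilityMeasure (μ.map f₂) := Measure.isProbabilityMeasure_map hf₂.aemeasurable
  haveI : IsProbabilityMeasure (μ.map g₁) := Measure.isProbabilityMeasure_map hg₁.aemeasurable
  haveI : IsProbabilityMeasure (μ.map g₂) := Measure.isProbabilityMeasure_map hg₂.aemeasurable
  haveI : IsProbabilityMeasure (μ.map (fun ω => (f₁ ω, f₂ ω))) :=
    Measure.isProbabilityMeasure_map (hf₁.prodMk hf₂).aemeasurable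
  -- one-coordinate swaps for products, via Fubini
  have prod_swap_right : ∀ (ν : Measure (T₁ → ℝ)) [IsProbabilityMeasure ν],
      ∀ A : Set ((T₁ → ℝ) × (T₂ → ℝ)), MeasurableSet A →
      (ν.prod (μ.map g₂)) A ≤ (ν.prod (μ.map f₂)) A + ENNReal.ofReal δ₂ := by
    intro ν _ A hA
    rw [Measure.prod_apply hA, Measure.prod_apply hA]
    calc ∫⁻ x, (μ.map g₂) (Prod.mk x ⁻¹' A) ∂ν
        ≤ ∫⁻ x, ((μ.map f₂) (Prod.mk x ⁻¹' A) + ENNReal.ofReal δ₂) ∂ν := by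
          refine lintegral_mono fun x => ?_
          exact map_apply_le_of_eqOn μ hg₂ hf₂ (fun ω hω => (hE₂eq ω hω).symm) h₂
            (hA.preimage measurable_prodMk_left)
      _ = ∫⁻ x, (μ.map f₂) (Prod.mk x ⁻¹' A) ∂ν + ENNReal.ofReal δ₂ := by
          rw [lintegral_add_right _ measurable_const, lintegral_const, measure_univ, mul_one]
  have prod_swap_right' : ∀ (ν : Measure (T₁ → ℝ)) [IsProbabilityMeasure ν],
      ∀ A : Set ((T₁ → ℝ) × (T₂ → ℝ)), MeasurableSet A →
      (ν.prod (μ.map f₂)) A ≤ (ν.prod (μ.map g₂)) A + ENNReal.ofReal δ₂ := by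
    intro ν _ A hA
    rw [Measure.prod_apply hA, Measure.prod_apply hA]
    calc ∫⁻ x, (μ.map f₂) (Prod.mk x ⁻¹' A) ∂ν
        ≤ ∫⁻ x, ((μ.map g₂) (Prod.mk x ⁻¹' A) + ENNReal.ofReal δ₂) ∂ν := by
          refine lintegral_mono fun x => ?_
          exact map_apply_le_of_eqOn μ hf₂ hg₂ hE₂eq h₂
            (hA.preimage measurable_prodMk_left)
      _ = ∫⁻ x, (μ.map g₂) (Prod.mk x ⁻¹' A) ∂ν + ENNReal.ofReal δ₂ := by
          rw [lintegral_add_right _ measurable_const, lintegral_const, measure_univ, mul_one]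
  have prod_swap_left : ∀ (ν : Measure (T₂ → ℝ)) [IsProbabilityMeasure ν],
      ∀ A : Set ((T₁ → ℝ) × (T₂ → ℝ)), MeasurableSet A →
      ((μ.map g₁).prod ν) A ≤ ((μ.map f₁).prod ν) A + ENNReal.ofReal δ₁ := by
    intro ν _ A hA
    rw [Measure.prod_apply_symm hA, Measure.prod_apply_symm hA]
    calc ∫⁻ y, (μ.map g₁) ((fun x => (x, y)) ⁻¹' A) ∂ν
        ≤ ∫⁻ y, ((μ.map f₁) ((fun x => (x, y)) ⁻¹' A) + ENNReal.ofReal δ₁) ∂ν := by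
          refine lintegral_mono fun y => ?_
          exact map_apply_le_of_eqOn μ hg₁ hf₁ (fun ω hω => (hE₁eq ω hω).symm) h₁
            (hA.preimage measurable_prodMk_right)
      _ = ∫⁻ y, (μ.map f₁) ((fun x => (x, y)) ⁻¹' A) ∂ν + ENNReal.ofReal δ₁ := by
          rw [lintegral_add_right _ measurable_const, lintegral_const, measure_univ, mul_one]
  have prod_swap_left' : ∀ (ν : Measure (T₂ → ℝ)) [IsProbabilityMeasure ν],
      ∀ A : Set ((T₁ → ℝ) × (T₂ → ℝ)), MeasurableSet A →
      ((μ.map f₁).prod ν) A ≤ ((μ.map g₁).prod ν) A + ENNReal.ofReal δ₁ := by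
    intro ν _ A hA
    rw [Measure.prod_apply_symm hA, Measure.prod_apply_symm hA]
    calc ∫⁻ y, (μ.map f₁) ((fun x => (x, y)) ⁻¹' A) ∂ν
        ≤ ∫⁻ y, ((μ.map g₁) ((fun x => (x, y)) ⁻¹' A) + ENNReal.ofReal δ₁) ∂ν := by
          refine lintegral_mono fun y => ?_
          exact map_apply_le_of_eqOn μ hf₁ hg₁ hE₁eq h₁
            (hA.preimage measurable_prodMk_right)
      _ = ∫⁻ y, (μ.map g₁) ((fun x => (x, y)) ⁻¹' A) ∂ν + ENNReal.ofReal δ₁ := by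
          rw [lintegral_add_right _ measurable_const, lintegral_const, measure_univ, mul_one]
  -- the two per-set bounds with ε = 2(δ₁+δ₂)
  set ε : ℝ := 2 * (δ₁ + δ₂) with hεdef
  have hofReal : ENNReal.ofReal δ₁ + ENNReal.ofReal δ₂ + (ENNReal.ofReal δ₂ + ENNReal.ofReal δ₁)
      = ENNReal.ofReal ε := by
    rw [← ENNReal.ofReal_add hδ₁.le hδ₂.le, ← ENNReal.ofReal_add hδ₂.le hδ₁.le,
      ← ENNReal.ofReal_add (by positivity) (by positivity)]
    ring_nf
    rw [hεdef]; ring_nf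
  have hab : ∀ A : Set ((T₁ → ℝ) × (T₂ → ℝ)), MeasurableSet A →
      (μ.map (fun ω => (f₁ ω, f₂ ω))) A
        ≤ ((μ.map f₁).prod (μ.map f₂)) A + ENNReal.ofReal ε := by
    intro A hA
    calc (μ.map (fun ω => (f₁ ω, f₂ ω))) A
        ≤ (μ.map (fun ω => (g₁ ω, f₂ ω))) A + ENNReal.ofReal δ₁ := by
          refine map_apply_le_of_eqOn μ (hf₁.prodMk hf₂) (hg₁.prodMk hf₂) ?_ h₁ hA
          intro ω hω; rw [hE₁eq ω hω]
      _ ≤ ((μ.map (fun ω => (g₁ ω, g₂ ω))) A + ENNReal.ofReal δ₂) + ENNReal.ofReal δ₁ := by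
          gcongr
          refine map_apply_le_of_eqOn μ (hg₁.prodMk hf₂) (hg₁.prodMk hg₂) ?_ h₂ hA
          intro ω hω; rw [hE₂eq ω hω]
      _ = ((μ.map g₁).prod (μ.map g₂)) A + ENNReal.ofReal δ₂ + ENNReal.ofReal δ₁ := by
          rw [hmap]
      _ ≤ (((μ.map g₁).prod (μ.map f₂)) A + ENNReal.ofReal δ₂)
            + ENNReal.ofReal δ₂ + ENNReal.ofReal δ₁ := by
          gcongr; exact prod_swap_right _ A hA
      _ ≤ ((((μ.map f₁).prod (μ.map f₂)) A + ENNReal.ofReal δ₁) + ENNReal.ofReal δ₂)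
            + ENNReal.ofReal δ₂ + ENNReal.ofReal δ₁ := by
          gcongr; exact prod_swap_left _ A hA
      _ = ((μ.map f₁).prod (μ.map f₂)) A + ENNReal.ofReal ε := by
          rw [← hofReal]; ring
  have hba : ∀ A : Set ((T₁ → ℝ) × (T₂ → ℝ)), MeasurableSet A →
      ((μ.map f₁).prod (μ.map f₂)) A
        ≤ (μ.map (fun ω => (f₁ ω, f₂ ω))) A + ENNReal.ofReal ε := by
    intro A hA
    calc ((μ.map f₁).prod (μ.map f₂)) A
        ≤ ((μ.map g₁).prod (μ.map f₂)) A + ENNReal.ofReal δ₁ := prod_swap_left' _ A hA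
      _ ≤ (((μ.map g₁).prod (μ.map g₂)) A + ENNReal.ofReal δ₂) + ENNReal.ofReal δ₁ := by
          gcongr; exact prod_swap_right' _ A hA
      _ = ((μ.map (fun ω => (g₁ ω, g₂ ω))) A + ENNReal.ofReal δ₂) + ENNReal.ofReal δ₁ := by
          rw [hmap]
      _ ≤ (((μ.map (fun ω => (g₁ ω, f₂ ω))) A + ENNReal.ofReal δ₂) + ENNReal.ofReal δ₂)
            + ENNReal.ofReal δ₁ := by
          gcongr
          refine map_apply_le_of_eqOn μ (hg₁.prodMk hg₂) (hg₁.prodMk hf₂) ?_ h₂ hA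
          intro ω hω; rw [hE₂eq ω hω]
      _ ≤ ((((μ.map (fun ω => (f₁ ω, f₂ ω))) A + ENNReal.ofReal δ₁) + ENNReal.ofReal δ₂)
            + ENNReal.ofReal δ₂) + ENNReal.ofReal δ₁ := by
          gcongr
          refine map_apply_le_of_eqOn μ (hg₁.prodMk hf₂) (hf₁.prodMk hf₂) ?_ h₁ hA
          intro ω hω; rw [hE₁eq ω hω]
      _ = (μ.map (fun ω => (f₁ ω, f₂ ω))) A + ENNReal.ofReal ε := by
          rw [← hofReal]; ring
  have hεpos : (0 : ℝ) ≤ ε := by positivity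
  calc ((μ.map (fun ω => (f₁ ω, f₂ ω))).toSignedMeasure
        - ((μ.map f₁).prod (μ.map f₂)).toSignedMeasure).totalVariation Set.univ
      ≤ ENNReal.ofReal (2 * ε) :=
        totalVariation_le_of_close _ _ hεpos hab hba
    _ ≤ ENNReal.ofReal (8 * (δ₁ + δ₂)) := by
        apply ENNReal.ofReal_le_ofReal; nlinarith
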